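/- Lemma 5 (sum of ratios of the square of a decayed sum and a decayed sum of squares): Let 0 < β₁ < β₂ ≤ 1, ε > 0, and let (a_n)_{n∈ℕ⁺} be a real sequence. Define b_n = Σ_{j=1}^n β₂^{n−j} a_j² and c_n = Σ_{j=1}^n β₁^{n−j} a_j. Then for every n ∈ ℕ⁺, Σ_{j=1}^n c_j²/(ε + b_j) ≤ (1/((1−β₁)(1−β₁/β₂))) · [ ln(1 + b_n/ε) − n·ln(β₂) ]. -/

import Mathlib

open Finset

lemma adam_geo_range {q : ℝ} (hq0 : 0 ≤ q) (hq1 : q < 1) (m : ℕ) :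
    ∑ k ∈ Finset.range m, q ^ k ≤ 1 / (1 - q) := by
  rw [le_div_iff₀ (by linarith)]
  nlinarith [geom_sum_mul q m, pow_nonneg hq0 m]

lemma adam_geoA {q : ℝ} (hq0 : 0 ≤ q) (hq1 : q < 1) (j : ℕ) :
    ∑ l ∈ Finset.Icc 1 j, q ^ (j - l) ≤ 1 / (1 - q) := by
  induction j with
  | zero =>
    simp only [Finset.Icc_eq_empty_of_lt (by omega : (0:ℕ) < 1), Finset.sum_empty]
    have : (0:ℝ) < 1 - q := by linarith
    positivity
  | succ j ih =>
    rw [Finset.sum_Icc_succ_top (by omega)]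
    have h1 : ∀ l ∈ Finset.Icc 1 j, q ^ (j + 1 - l) = q * q ^ (j - l) := by
      intro l hl
      rw [Finset.mem_Icc] at hl
      rw [← pow_succ']
      congr 1
      omega
    rw [Finset.sum_congr rfl h1, ← Finset.mul_sum]
    simp only [Nat.sub_self, pow_zero]
    have h2 : q * ∑ l ∈ Finset.Icc 1 j, q ^ (j - l) ≤ q * (1 / (1 - q)) :=
      mul_le_mul_of_nonneg_left ih hq0
    have h3 : q * (1 / (1 - q)) + 1 = 1 / (1 - q) := by
      have h0 : (1:ℝ) - q ≠ 0 := by linarith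
      field_simp
      ring
    linarith

lemma adam_geoB {q : ℝ} (hq0 : 0 ≤ q) (hq1 : q < 1) (l n : ℕ) :
    ∑ j ∈ Finset.Icc l n, q ^ (j - l) ≤ 1 / (1 - q) := by
  have h : Finset.Icc l n = Finset.Ico l (n + 1) := by rw [Finset.Ico_add_one_right_eq_Icc]
  rw [h, Finset.sum_Ico_eq_sum_range]
  have h2 : ∀ i ∈ Finset.range (n + 1 - l), q ^ (l + i - l) = q ^ i := by
    intro i _; congr 1; omega
  rw [Finset.sum_congr rfl h2]
  exact adam_geo_range hq0 hq1 _

lemma adam_b_rec (β₂ : ℝ) (a b : ℕ → ℝ)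
    (hb : ∀ n, 1 ≤ n → b n = ∑ j ∈ Finset.Icc 1 n, β₂ ^ (n - j) * (a j) ^ 2)
    (l : ℕ) (hl : 1 ≤ l) : b (l + 1) = β₂ * b l + a (l + 1) ^ 2 := by
  rw [hb (l+1) (by omega), Finset.sum_Icc_succ_top (by omega), hb l hl, Finset.mul_sum]
  simp only [Nat.sub_self, pow_zero, one_mul]
  congr 1
  apply Finset.sum_congr rfl
  intro j hj
  rw [Finset.mem_Icc] at hj
  rw [← mul_assoc, ← pow_succ']
  congr 2
  omega

lemma adam_b_mono (β₂ ε : ℝ) (hβ₂0 : 0 < β₂) (hβ₂1 : β₂ ≤ 1) (hε : 0 < ε) (a b : ℕ → ℝ)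
    (hb : ∀ n, 1 ≤ n → b n = ∑ j ∈ Finset.Icc 1 n, β₂ ^ (n - j) * (a j) ^ 2)
    (l : ℕ) (hl : 1 ≤ l) : ∀ j, l ≤ j → β₂ ^ (j - l) * (ε + b l) ≤ ε + b j := by
  intro j hj
  induction j, hj using Nat.le_induction with
  | base => simp
  | succ j hj ih =>
    have hrec := adam_b_rec β₂ a b hb j (le_trans hl hj)
    have h1 : β₂ ^ (j + 1 - l) = β₂ * β₂ ^ (j - l) := by
      rw [← pow_succ']; congr 1; omega
    have h2 : β₂ * (β₂ ^ (j - l) * (ε + b l)) ≤ β₂ * (ε + b j) :=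
      mul_le_mul_of_nonneg_left ih (le_of_lt hβ₂0)
    rw [h1, mul_assoc]
    nlinarith [sq_nonneg (a (j + 1))]

lemma adam_log_sum (β₂ ε : ℝ) (hβ₂0 : 0 < β₂) (hβ₂1 : β₂ ≤ 1) (hε : 0 < ε) (a b : ℕ → ℝ)
    (hb : ∀ n, 1 ≤ n → b n = ∑ j ∈ Finset.Icc 1 n, β₂ ^ (n - j) * (a j) ^ 2)
    (n : ℕ) (hn : 1 ≤ n) :
    ∑ l ∈ Finset.Icc 1 n, (a l) ^ 2 / (ε + b l)
      ≤ Real.log (1 + b n / ε) - n * Real.log β₂ := by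
  set B : ℕ → ℝ := fun l => if l = 0 then 0 else b l with hBdef
  have hBnn : ∀ l, 0 ≤ B l := by
    intro l
    by_cases h : l = 0
    · simp [hBdef, h]
    · simp only [hBdef, if_neg h]
      rw [hb l (by omega)]
      apply Finset.sum_nonneg
      intro j _
      positivity
  have hbpos : ∀ l, 0 < ε + B l := fun l => by linarith [hBnn l]
  have hBeq : ∀ l, 1 ≤ l → B l = b l := by
    intro l hl; simp only [hBdef, if_neg (by omega : l ≠ 0)]
  have hrecB : ∀ l, 1 ≤ l → b l = β₂ * B (l - 1) + a l ^ 2 := by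
    intro l hl
    rcases Nat.exists_eq_add_of_le hl with ⟨m, rfl⟩
    rcases Nat.eq_zero_or_pos m with hm | hm
    · subst hm
      simp only [hBdef]
      rw [hb 1 le_rfl]
      simp
    · have h1 : 1 + m = m + 1 := by omega
      rw [h1, adam_b_rec β₂ a b hb m hm]
      have h2 : m + 1 - 1 = m := by omega
      rw [h2, hBeq m hm]
  set g : ℕ → ℝ := fun l => Real.log (ε + B l) with hgdef
  have step : ∀ l ∈ Finset.Icc 1 n,
      a l ^ 2 / (ε + b l) ≤ g l - g (l - 1) - Real.log β₂ := by
    intro l hl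
    rw [Finset.mem_Icc] at hl
    have hl1 : 1 ≤ l := hl.1
    have hB : B l = b l := hBeq l hl1
    have hrec := hrecB l hl1
    set x := ε + b l with hx'
    set y := ε + β₂ * B (l - 1) with hy'
    have hy : 0 < y := by
      have := hBnn (l - 1)
      have : 0 ≤ β₂ * B (l - 1) := mul_nonneg (le_of_lt hβ₂0) this
      linarith
    have hxy : y ≤ x := by
      have := sq_nonneg (a l)
      simp only [hx', hy']
      nlinarith
    have hx : 0 < x := lt_of_lt_of_le hy hxy
    have key : Real.log (y / x) ≤ y / x - 1 := Real.log_le_sub_one_of_pos (by positivity)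
    rw [Real.log_div (ne_of_gt hy) (ne_of_gt hx)] at key
    have h2 : a l ^ 2 / x = 1 - y / x := by
      have hax : a l ^ 2 = x - y := by simp only [hx', hy']; linarith
      rw [hax]
      field_simp
    have h3 : β₂ * (ε + B (l - 1)) ≤ y := by
      simp only [hy']
      nlinarith
    have h4 : Real.log (β₂ * (ε + B (l - 1))) ≤ Real.log y :=
      Real.log_le_log (mul_pos hβ₂0 (hbpos _)) h3
    rw [Real.log_mul (ne_of_gt hβ₂0) (ne_of_gt (hbpos _))] at h4
    have hgl : g l = Real.log x := by simp only [hgdef, hB, hx']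
    have hgl1 : g (l - 1) = Real.log (ε + B (l - 1)) := rfl
    rw [hgl, hgl1]
    linarith
  calc ∑ l ∈ Finset.Icc 1 n, a l ^ 2 / (ε + b l)
      ≤ ∑ l ∈ Finset.Icc 1 n, (g l - g (l - 1) - Real.log β₂) :=
        Finset.sum_le_sum step
    _ = g n - g 0 - n * Real.log β₂ := by
        rw [← Finset.Ico_add_one_right_eq_Icc, Finset.sum_Ico_eq_sum_range]
        have hsimp : ∀ i ∈ Finset.range (n + 1 - 1),
            g (1 + i) - g (1 + i - 1) - Real.log β₂
              = (g (i + 1) - g i) - Real.log β₂ := by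
          intro i _
          have e1 : 1 + i = i + 1 := by omega
          rw [e1]
          simp only [Nat.add_sub_cancel]
        rw [Finset.sum_congr rfl hsimp, Finset.sum_sub_distrib,
          Finset.sum_range_sub, Finset.sum_const, Finset.card_range]
        have e3 : n + 1 - 1 = n := by omega
        rw [e3]
        simp [nsmul_eq_mul]
    _ = Real.log (1 + b n / ε) - n * Real.log β₂ := by
        have hg0 : g 0 = Real.log ε := by simp [hgdef, hBdef]
        have hgn : g n = Real.log (ε + b n) := by rw [hgdef]; simp only [hBeq n hn]
        have hbn : 0 < ε + b n := by rw [← hBeq n hn]; exact hbpos n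
        have e : 1 + b n / ε = (ε + b n) / ε := by field_simp
        rw [hg0, hgn, e, Real.log_div (ne_of_gt hbn) (ne_of_gt hε)]

lemma adam_cs_step (β₁ : ℝ) (hβ₁0 : 0 < β₁) (hβ₁1 : β₁ < 1) (a c : ℕ → ℝ)
    (hc : ∀ n, 1 ≤ n → c n = ∑ j ∈ Finset.Icc 1 n, β₁ ^ (n - j) * a j)
    (j : ℕ) (hj : 1 ≤ j) :
    (c j) ^ 2 ≤ (1 / (1 - β₁)) * ∑ l ∈ Finset.Icc 1 j, β₁ ^ (j - l) * (a l) ^ 2 := by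
  rw [hc j hj]
  have key := Finset.sum_mul_sq_le_sq_mul_sq (Finset.Icc 1 j)
    (fun l => Real.sqrt (β₁ ^ (j - l))) (fun l => Real.sqrt (β₁ ^ (j - l)) * a l)
  have e1 : ∀ l ∈ Finset.Icc 1 j,
      Real.sqrt (β₁ ^ (j - l)) * (Real.sqrt (β₁ ^ (j - l)) * a l) = β₁ ^ (j - l) * a l := by
    intro l _
    rw [← mul_assoc, Real.mul_self_sqrt (pow_nonneg hβ₁0.le _)]
  have e2 : ∀ l ∈ Finset.Icc 1 j,
      (Real.sqrt (β₁ ^ (j - l))) ^ 2 = β₁ ^ (j - l) := by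
    intro l _
    exact Real.sq_sqrt (pow_nonneg hβ₁0.le _)
  have e3 : ∀ l ∈ Finset.Icc 1 j,
      (Real.sqrt (β₁ ^ (j - l)) * a l) ^ 2 = β₁ ^ (j - l) * (a l) ^ 2 := by
    intro l _
    rw [mul_pow, Real.sq_sqrt (pow_nonneg hβ₁0.le _)]
  rw [Finset.sum_congr rfl e1, Finset.sum_congr rfl e2, Finset.sum_congr rfl e3] at key
  refine le_trans key ?_
  apply mul_le_mul_of_nonneg_right (adam_geoA hβ₁0.le hβ₁1 j)
  apply Finset.sum_nonneg
  intro l _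
  positivity

/-- Lemma 5: sum of ratios of the square of a decayed sum and a decayed sum of squares. -/
theorem sum_ratios_sq_decayed
    (β₁ β₂ ε : ℝ) (hβ₁0 : 0 < β₁) (hβ₁₂ : β₁ < β₂) (hβ₂1 : β₂ ≤ 1) (hε : 0 < ε)
    (a : ℕ → ℝ)
    (b c : ℕ → ℝ)
    (hb : ∀ n, 1 ≤ n → b n = ∑ j ∈ Finset.Icc 1 n, β₂ ^ (n - j) * (a j) ^ 2)
    (hc : ∀ n, 1 ≤ n → c n = ∑ j ∈ Finset.Icc 1 n, β₁ ^ (n - j) * a j)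
    (n : ℕ) (hn : 1 ≤ n) :
    ∑ j ∈ Finset.Icc 1 n, (c j) ^ 2 / (ε + b j)
      ≤ (1 / ((1 - β₁) * (1 - β₁ / β₂)))
          * (Real.log (1 + b n / ε) - n * Real.log β₂) := by
  have hβ₂0 : 0 < β₂ := lt_trans hβ₁0 hβ₁₂
  have hβ₁1 : β₁ < 1 := lt_of_lt_of_le hβ₁₂ hβ₂1
  set q := β₁ / β₂ with hqdef
  have hq0 : 0 ≤ q := div_nonneg hβ₁0.le hβ₂0.le
  have hq1 : q < 1 := (div_lt_one hβ₂0).mpr hβ₁₂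
  have hK1 : (0:ℝ) < 1 - β₁ := by linarith
  have hK2 : (0:ℝ) < 1 - q := by linarith
  have hbnn : ∀ l, 1 ≤ l → 0 ≤ b l := by
    intro l hl
    rw [hb l hl]
    apply Finset.sum_nonneg
    intro j _
    positivity
  have hpos : ∀ l, 1 ≤ l → 0 < ε + b l := by
    intro l hl
    linarith [hbnn l hl]
  calc ∑ j ∈ Finset.Icc 1 n, (c j) ^ 2 / (ε + b j)
      ≤ ∑ j ∈ Finset.Icc 1 n,
          ((1 / (1 - β₁)) * ∑ l ∈ Finset.Icc 1 j, β₁ ^ (j - l) * (a l) ^ 2) / (ε + b j) := by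
        apply Finset.sum_le_sum
        intro j hj
        rw [Finset.mem_Icc] at hj
        exact (div_le_div_iff_of_pos_right (hpos j hj.1)).mpr
          (adam_cs_step β₁ hβ₁0 hβ₁1 a c hc j hj.1)
    _ = (1 / (1 - β₁)) * ∑ j ∈ Finset.Icc 1 n,
          ∑ l ∈ Finset.Icc 1 j, (β₁ ^ (j - l) * (a l) ^ 2) / (ε + b j) := by
        rw [Finset.mul_sum]
        apply Finset.sum_congr rfl
        intro j _
        rw [mul_div_assoc, Finset.sum_div]
    _ ≤ (1 / (1 - β₁)) * ∑ j ∈ Finset.Icc 1 n,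
          ∑ l ∈ Finset.Icc 1 j, q ^ (j - l) * ((a l) ^ 2 / (ε + b l)) := by
        apply mul_le_mul_of_nonneg_left _ (by positivity)
        apply Finset.sum_le_sum
        intro j hj
        rw [Finset.mem_Icc] at hj
        apply Finset.sum_le_sum
        intro l hl
        rw [Finset.mem_Icc] at hl
        have hmono := adam_b_mono β₂ ε hβ₂0 hβ₂1 hε a b hb l hl.1 j hl.2
        have hpl := hpos l hl.1
        have hpj := hpos j hj.1
        have hpow : β₁ ^ (j - l) = q ^ (j - l) * β₂ ^ (j - l) := by
          rw [hqdef, ← mul_pow, div_mul_cancel₀ _ (ne_of_gt hβ₂0)]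
        rw [hpow, mul_assoc, mul_div_assoc]
        apply mul_le_mul_of_nonneg_left _ (pow_nonneg hq0 _)
        rw [div_le_div_iff₀ hpj hpl]
        nlinarith [mul_le_mul_of_nonneg_left hmono (sq_nonneg (a l))]
    _ = (1 / (1 - β₁)) * ∑ l ∈ Finset.Icc 1 n,
          ((a l) ^ 2 / (ε + b l)) * ∑ j ∈ Finset.Icc l n, q ^ (j - l) := by
        congr 1
        have hswap : ∑ j ∈ Finset.Icc 1 n, ∑ l ∈ Finset.Icc 1 j,
              q ^ (j - l) * ((a l) ^ 2 / (ε + b l))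
            = ∑ l ∈ Finset.Icc 1 n, ∑ j ∈ Finset.Icc l n,
              q ^ (j - l) * ((a l) ^ 2 / (ε + b l)) :=
          Finset.sum_comm' (fun x y => by simp only [Finset.mem_Icc]; omega)
        rw [hswap]
        apply Finset.sum_congr rfl
        intro l _
        rw [Finset.mul_sum]
        exact Finset.sum_congr rfl fun i _ => mul_comm _ _
    _ ≤ (1 / (1 - β₁)) * ∑ l ∈ Finset.Icc 1 n,
          ((a l) ^ 2 / (ε + b l)) * (1 / (1 - q)) := by
        apply mul_le_mul_of_nonneg_left _ (by positivity)
        apply Finset.sum_le_sum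
        intro l hl
        rw [Finset.mem_Icc] at hl
        exact mul_le_mul_of_nonneg_left (adam_geoB hq0 hq1 l n)
          (div_nonneg (sq_nonneg _) (hpos l hl.1).le)
    _ = (1 / (1 - β₁)) * (1 / (1 - q)) * ∑ l ∈ Finset.Icc 1 n, (a l) ^ 2 / (ε + b l) := by
        rw [← Finset.sum_mul]
        ring
    _ ≤ (1 / (1 - β₁)) * (1 / (1 - q)) * (Real.log (1 + b n / ε) - n * Real.log β₂) := by
        apply mul_le_mul_of_nonneg_left
          (adam_log_sum β₂ ε hβ₂0 hβ₂1 hε a b hb n hn) (by positivity)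
    _ = (1 / ((1 - β₁) * (1 - q))) * (Real.log (1 + b n / ε) - n * Real.log β₂) := by
        rw [div_mul_div_comm, one_mul]
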